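/- Let c′ be a symmetric N×N complex matrix such that c′_{nm} − c′_{n+1,m} ∈ ℤ for all 1 ≤ n ≤ N−1 and 1 ≤ m ≤ N. For 1 ≤ n ≤ N set h_n(γ) = ∑_{j=1}^{n} γ_{nj} − ∑_{j=1}^{n−1} γ_{n−1,j}, and for 1 ≤ n ≤ N−1 set d_n = 2n − c′_{nn} + 2c′_{n,n+1} − c′_{n+1,n+1} − 1 (an integer) and χ′_n = (−1)^{d_n}. Define w′ : ℂ^Γ → ℂ by w′(γ) = exp(−(πi/(ω₁ω₂)) ∑_{n,m=1}^{N} c′_{nm} h_n(γ) h_m(γ)) · ∏_{n=1}^{N−1} exp((πi/(ω₁ω₂)) ∑_{p=1}^{n} γ_{np}² + (π(ω₁+ω₂) d_n/(ω₁ω₂)) ∑_{p=1}^{n} γ_{np}). Then w′ is a Whittaker vector: for every 1 ≤ n ≤ N−1, ϱ(E_{n+1,n}) w′ = (χ′_n/(q − q^{−1})) · ϱ(K_n)^{−1} ∘ ∏_{m=1}^{N} ϱ(K_m)^{c′_{nm} − c′_{n+1,m}} applied to w′, at every point γ at which all sinh-denominators occurring are nonzero. -/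

import Mathlib

noncomputable section

open Finset

/-- A point of the variable space: an assignment of a complex number to each
index pair `(n, j)` (with `γ (N, j)` playing the role of the fixed top-level
parameters). -/
abbrev Pt : Type := ℕ × ℕ → ℂ

set_option maxRecDepth 8000
set_option maxHeartbeats 1000000

lemma eval_zero_interpolate {s : Finset ℕ} (A : ℕ → ℂ) (hinj : Set.InjOn A s)
    (f : Polynomial ℂ) (hdeg : f.degree < s.card) :
    f.eval 0 = ∑ j ∈ s, f.eval (A j) *
      ∏ k ∈ s.erase j, (-A k) / (A j - A k) := by
  have h := Lagrange.eq_interpolate hinj hdeg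
  conv_lhs => rw [h]
  rw [Lagrange.interpolate_apply, Polynomial.eval_finset_sum]
  refine Finset.sum_congr rfl fun j hj => ?_
  rw [Polynomial.eval_mul, Polynomial.eval_C]
  congr 1
  rw [Lagrange.basis, Polynomial.eval_prod]
  refine Finset.prod_congr rfl fun k hk => ?_
  rw [Lagrange.basisDivisor, Polynomial.eval_mul, Polynomial.eval_C, Polynomial.eval_sub,
    Polynomial.eval_X, Polynomial.eval_C]
  rw [zero_sub, div_eq_inv_mul]

lemma key_sum (n : ℕ) (hn : 1 ≤ n) (A B : ℕ → ℂ) (C₀ : ℂ)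
    (hA0 : ∀ j ∈ Finset.Icc 1 n, A j ≠ 0) (hinj : Set.InjOn A (Finset.Icc 1 n)) :
    ∑ j ∈ Finset.Icc 1 n, (∏ r ∈ Finset.Icc 1 (n-1), (C₀ * A j - B r)) /
        (A j * ∏ k ∈ (Finset.Icc 1 n).erase j, (A j - A k)) =
      (∏ r ∈ Finset.Icc 1 (n-1), B r) / ∏ k ∈ Finset.Icc 1 n, A k := by
  set f : Polynomial ℂ := ∏ r ∈ Finset.Icc 1 (n-1), (Polynomial.C C₀ * Polynomial.X - Polynomial.C (B r)) with hf
  have hcard : (Finset.Icc 1 n).card = n := by simp [Nat.card_Icc]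
  have hdeg : f.degree < (Finset.Icc 1 n).card := by
    rw [hcard]
    have h1 : f.natDegree ≤ n - 1 := by
      refine (Polynomial.natDegree_prod_le _ _).trans ?_
      calc ∑ r ∈ Finset.Icc 1 (n-1), (Polynomial.C C₀ * Polynomial.X - Polynomial.C (B r)).natDegree
          ≤ ∑ r ∈ Finset.Icc 1 (n-1), 1 := by
            refine Finset.sum_le_sum fun r _ => ?_
            refine (Polynomial.natDegree_sub_le _ _).trans ?_
            simp [Polynomial.natDegree_C_mul_le]
            exact (Polynomial.natDegree_mul_le).trans (by simp)
        _ = n - 1 := by simp [Nat.card_Icc]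
    calc f.degree ≤ (f.natDegree : WithBot ℕ) := Polynomial.degree_le_natDegree
      _ ≤ ((n-1 : ℕ) : WithBot ℕ) := by exact_mod_cast h1
      _ < (n : WithBot ℕ) := by exact_mod_cast Nat.sub_lt_of_pos_le one_pos hn
  have heval : ∀ x : ℂ, f.eval x = ∏ r ∈ Finset.Icc 1 (n-1), (C₀ * x - B r) := by
    intro x; rw [hf, Polynomial.eval_prod]; simp
  have h0 := eval_zero_interpolate A hinj f hdeg
  rw [heval 0] at h0
  -- h0 : ∏ (C₀*0 - B r) = Σ_j f.eval (A j) * ∏ (-A k)/(A j - A k)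
  have hprodA : ∏ k ∈ Finset.Icc 1 n, A k ≠ 0 := Finset.prod_ne_zero_iff.mpr hA0
  have key : ∀ j ∈ Finset.Icc 1 n,
      f.eval (A j) * ∏ k ∈ (Finset.Icc 1 n).erase j, (-A k) / (A j - A k)
      = (-1)^(n-1) * (∏ k ∈ Finset.Icc 1 n, A k) *
        ((∏ r ∈ Finset.Icc 1 (n-1), (C₀ * A j - B r)) /
          (A j * ∏ k ∈ (Finset.Icc 1 n).erase j, (A j - A k))) := by
    intro j hj
    have hAj : A j ≠ 0 := hA0 j hj
    have hne : ∀ k ∈ (Finset.Icc 1 n).erase j, A j - A k ≠ 0 := by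
      intro k hk
      have hk' := Finset.mem_of_mem_erase hk
      have hkj : k ≠ j := Finset.ne_of_mem_erase hk
      exact sub_ne_zero.mpr fun h => hkj (hinj hk' hj h.symm)
    have hpd : ∏ k ∈ (Finset.Icc 1 n).erase j, (A j - A k) ≠ 0 :=
      Finset.prod_ne_zero_iff.mpr hne
    rw [heval]
    rw [Finset.prod_div_distrib]
    have hcarde : ((Finset.Icc 1 n).erase j).card = n - 1 := by
      rw [Finset.card_erase_of_mem hj, hcard]
    have : ∏ k ∈ (Finset.Icc 1 n).erase j, (-A k)
        = (-1)^(n-1) * ∏ k ∈ (Finset.Icc 1 n).erase j, A k := by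
      rw [← hcarde]
      calc ∏ k ∈ (Finset.Icc 1 n).erase j, -A k
          = ∏ k ∈ (Finset.Icc 1 n).erase j, ((-1) * A k) :=
            Finset.prod_congr rfl fun k _ => by ring
        _ = _ := by rw [Finset.prod_mul_distrib, Finset.prod_const]
    rw [this]
    have hprod_erase : ∏ k ∈ (Finset.Icc 1 n).erase j, A k
        = (∏ k ∈ Finset.Icc 1 n, A k) / A j := by
      field_simp [← Finset.prod_erase_mul _ _ hj]
      exact Finset.prod_erase_mul _ _ hj
    rw [hprod_erase]
    field_simp
  rw [Finset.sum_congr rfl key, ← Finset.mul_sum] at h0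
  have hsign : ((-1:ℂ))^(n-1) ≠ 0 := by
    simp
  have h0' : ∏ r ∈ Finset.Icc 1 (n-1), (C₀ * 0 - B r) = (-1)^(n-1) * ∏ r ∈ Finset.Icc 1 (n-1), B r := by
    have : ∀ r ∈ Finset.Icc 1 (n-1), C₀ * 0 - B r = -(B r) := by intro r _; ring
    rw [Finset.prod_congr rfl this]
    calc ∏ r ∈ Finset.Icc 1 (n-1), -B r
        = ∏ r ∈ Finset.Icc 1 (n-1), ((-1) * B r) :=
          Finset.prod_congr rfl fun r _ => by ring
      _ = _ := by rw [Finset.prod_mul_distrib, Finset.prod_const, Nat.card_Icc]; norm_num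
  rw [h0'] at h0
  have hB : (∏ r ∈ Finset.Icc 1 (n-1), B r)
      = (∏ k ∈ Finset.Icc 1 n, A k) *
        ∑ j ∈ Finset.Icc 1 n, (∏ r ∈ Finset.Icc 1 (n-1), (C₀ * A j - B r)) /
          (A j * ∏ k ∈ (Finset.Icc 1 n).erase j, (A j - A k)) := by
    apply mul_left_cancel₀ hsign
    rw [h0]; ring
  rw [eq_div_iff hprodA, hB]; ring

lemma csinh_eq (z : ℂ) : Complex.sinh z = (Complex.exp z - Complex.exp (-z)) / 2 := rfl

lemma sinh_ratio (u v : ℂ) : Complex.sinh (u - v) =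
    ((Complex.exp u)^2 - (Complex.exp v)^2) / (2 * Complex.exp u * Complex.exp v) := by
  rw [csinh_eq, neg_sub, Complex.exp_sub, Complex.exp_sub]
  field_simp [Complex.exp_ne_zero]

lemma sinh_sum (n : ℕ) (hn : 1 ≤ n) (κ t : ℂ) (x y : ℕ → ℂ)
    (hne : ∀ j s, j ∈ Finset.Icc 1 n → s ∈ Finset.Icc 1 n → j ≠ s →
      Complex.sinh (κ * (x j - x s)) ≠ 0) :
    ∑ j ∈ Finset.Icc 1 n,
      ((∏ r ∈ Finset.Icc 1 (n-1), Complex.sinh (κ * (x j - y r + t))) /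
        ∏ s ∈ (Finset.Icc 1 n).erase j, Complex.sinh (κ * (x j - x s))) *
          Complex.exp (-(κ * x j))
    = Complex.exp (-(κ * t) * ((n : ℂ) - 1)) *
        Complex.exp (κ * ((∑ r ∈ Finset.Icc 1 (n-1), y r) - ∑ s ∈ Finset.Icc 1 n, x s)) := by
  set a : ℕ → ℂ := fun j => Complex.exp (κ * x j) with ha
  set b : ℕ → ℂ := fun r => Complex.exp (κ * y r) with hb
  set c : ℂ := Complex.exp (κ * t) with hc
  set A : ℕ → ℂ := fun j => (a j)^2 with hA
  set B : ℕ → ℂ := fun r => (b r)^2 with hB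
  have ha0 : ∀ j, a j ≠ 0 := fun j => Complex.exp_ne_zero _
  have hb0 : ∀ r, b r ≠ 0 := fun r => Complex.exp_ne_zero _
  have hc0 : c ≠ 0 := Complex.exp_ne_zero _
  have hA0 : ∀ j ∈ Finset.Icc 1 n, A j ≠ 0 := fun j _ => pow_ne_zero _ (ha0 j)
  have hden : ∀ j s, Complex.sinh (κ * (x j - x s)) = (A j - A s) / (2 * a j * a s) := by
    intro j s
    have h1 : κ * (x j - x s) = κ * x j - κ * x s := by ring
    rw [h1, sinh_ratio]
  have hnum : ∀ j r, Complex.sinh (κ * (x j - y r + t)) =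
      (c^2 * A j - B r) / (2 * (a j * c) * b r) := by
    intro j r
    have h1 : κ * (x j - y r + t) = (κ * x j + κ * t) - κ * y r := by ring
    rw [h1, sinh_ratio, Complex.exp_add]
    simp only [hA, hB, ha, hb, hc]
    field_simp [Complex.exp_ne_zero]
  have hinj : Set.InjOn A (Finset.Icc 1 n) := by
    intro j hj s hs hjs
    by_contra hne'
    exact hne j s (by simpa using hj) (by simpa using hs) hne'
      (by rw [hden]; simp [hjs])
  have hAne : ∀ j ∈ Finset.Icc 1 n, ∀ s ∈ (Finset.Icc 1 n).erase j, A j - A s ≠ 0 := by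
    intro j hj s hs
    have hs' := Finset.mem_of_mem_erase hs
    have hsj : s ≠ j := Finset.ne_of_mem_erase hs
    refine sub_ne_zero.mpr fun h => hsj ?_
    exact hinj hs' hj h.symm
  have hterm : ∀ j ∈ Finset.Icc 1 n,
      ((∏ r ∈ Finset.Icc 1 (n-1), Complex.sinh (κ * (x j - y r + t))) /
        ∏ s ∈ (Finset.Icc 1 n).erase j, Complex.sinh (κ * (x j - x s))) *
          Complex.exp (-(κ * x j))
      = ((∏ s ∈ Finset.Icc 1 n, a s) / (c^(n-1) * ∏ r ∈ Finset.Icc 1 (n-1), b r)) *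
        ((∏ r ∈ Finset.Icc 1 (n-1), (c^2 * A j - B r)) /
          (A j * ∏ s ∈ (Finset.Icc 1 n).erase j, (A j - A s))) := by
    intro j hj
    have hexp : Complex.exp (-(κ * x j)) = (a j)⁻¹ := by
      rw [ha]; simp [← Complex.exp_neg]
    have hcard : ((Finset.Icc 1 n).erase j).card = n - 1 := by
      rw [Finset.card_erase_of_mem hj, Nat.card_Icc]; simp
    have hP1 : ∏ r ∈ Finset.Icc 1 (n-1), Complex.sinh (κ * (x j - y r + t))
        = (∏ r ∈ Finset.Icc 1 (n-1), (c^2 * A j - B r)) /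
          (2^(n-1) * (a j)^(n-1) * c^(n-1) * ∏ r ∈ Finset.Icc 1 (n-1), b r) := by
      rw [Finset.prod_congr rfl fun r _ => hnum j r, Finset.prod_div_distrib,
        Finset.prod_mul_distrib, Finset.prod_const]
      simp only [Nat.card_Icc, Nat.add_sub_cancel, mul_pow]
      ring
    have hP2 : ∏ s ∈ (Finset.Icc 1 n).erase j, Complex.sinh (κ * (x j - x s))
        = (∏ s ∈ (Finset.Icc 1 n).erase j, (A j - A s)) /
          (2^(n-1) * (a j)^(n-1) * ∏ s ∈ (Finset.Icc 1 n).erase j, a s) := by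
      rw [Finset.prod_congr rfl fun s _ => hden j s, Finset.prod_div_distrib,
        Finset.prod_mul_distrib, Finset.prod_mul_distrib, Finset.prod_const,
        Finset.prod_const, hcard]
    have hprod_erase : ∏ s ∈ Finset.Icc 1 n, a s
        = a j * ∏ s ∈ (Finset.Icc 1 n).erase j, a s := by
      rw [← Finset.prod_erase_mul _ _ hj]; ring
    rw [hP1, hP2, hexp]
    have h2n : (2:ℂ)^(n-1) ≠ 0 := pow_ne_zero _ two_ne_zero
    have hajn : (a j)^(n-1) ≠ 0 := pow_ne_zero _ (ha0 j)
    have hcn : c^(n-1) ≠ 0 := pow_ne_zero _ hc0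
    have hpb : ∏ r ∈ Finset.Icc 1 (n-1), b r ≠ 0 := Finset.prod_ne_zero_iff.mpr fun r _ => hb0 r
    have hpa : ∏ s ∈ (Finset.Icc 1 n).erase j, a s ≠ 0 :=
      Finset.prod_ne_zero_iff.mpr fun s _ => ha0 s
    have hpA : ∏ s ∈ (Finset.Icc 1 n).erase j, (A j - A s) ≠ 0 :=
      Finset.prod_ne_zero_iff.mpr (hAne j hj)
    have hAj : A j ≠ 0 := hA0 j hj
    rw [div_div_div_eq, ← div_eq_mul_inv, div_div, div_mul_div_comm, hprod_erase]
    rw [div_eq_div_iff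
      (mul_ne_zero (mul_ne_zero (mul_ne_zero (mul_ne_zero (mul_ne_zero h2n hajn) hcn) hpb) hpA) (ha0 j))
      (mul_ne_zero (mul_ne_zero hcn hpb) (mul_ne_zero hAj hpA))]
    simp only [hA]
    ring
  rw [Finset.sum_congr rfl hterm, ← Finset.mul_sum,
    key_sum n hn A B (c^2) hA0 hinj]
  have hpb : ∏ r ∈ Finset.Icc 1 (n-1), b r ≠ 0 := Finset.prod_ne_zero_iff.mpr fun r _ => hb0 r
  have hpa : ∏ s ∈ Finset.Icc 1 n, a s ≠ 0 := Finset.prod_ne_zero_iff.mpr fun s _ => ha0 s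
  have hcn : c^(n-1) ≠ 0 := pow_ne_zero _ hc0
  have hBb : ∏ r ∈ Finset.Icc 1 (n-1), B r = (∏ r ∈ Finset.Icc 1 (n-1), b r)^2 := by
    rw [hB, ← Finset.prod_pow]
  have hAa : ∏ s ∈ Finset.Icc 1 n, A s = (∏ s ∈ Finset.Icc 1 n, a s)^2 := by
    rw [hA, ← Finset.prod_pow]
  have hrhs1 : Complex.exp (-(κ * t) * ((n : ℂ) - 1)) = (c^(n-1))⁻¹ := by
    have h1 : (1:ℕ) ≤ n := hn
    have : -(κ * t) * ((n : ℂ) - 1) = -(((n-1 : ℕ) : ℂ) * (κ * t)) := by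
      push_cast [Nat.cast_sub h1]
      ring
    rw [this, Complex.exp_neg, Complex.exp_nat_mul, hc]
  have hrhs2 : Complex.exp (κ * ((∑ r ∈ Finset.Icc 1 (n-1), y r) - ∑ s ∈ Finset.Icc 1 n, x s))
      = (∏ r ∈ Finset.Icc 1 (n-1), b r) / ∏ s ∈ Finset.Icc 1 n, a s := by
    have h1 : κ * ((∑ r ∈ Finset.Icc 1 (n-1), y r) - ∑ s ∈ Finset.Icc 1 n, x s)
        = (∑ r ∈ Finset.Icc 1 (n-1), κ * y r) - ∑ s ∈ Finset.Icc 1 n, κ * x s := by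
      rw [mul_sub, Finset.mul_sum, Finset.mul_sum]
    rw [h1, Complex.exp_sub, Complex.exp_sum, Complex.exp_sum]
  rw [hrhs1, hrhs2, hBb, hAa]
  field_simp


/-- Operators acting on functions of the variables. -/
abbrev Op : Type := (Pt → ℂ) → (Pt → ℂ)

/-- Shift the coordinate `γ (n, j)` by `c`. -/
def shift (n j : ℕ) (c : ℂ) (γ : Pt) : Pt :=
  fun p => if p = (n, j) then γ p + c else γ p

/-- The quantum deformation parameter `q = exp(2πiω₁/ω₂)`. -/
def qpar (w1 w2 : ℂ) : ℂ := Complex.exp (2 * (Real.pi : ℂ) * Complex.I * w1 / w2)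

/-- The multiplier of the Cartan operator `ϱ(K_n)`. -/
def kfac (w2 : ℂ) (n : ℕ) (γ : Pt) : ℂ :=
  Complex.exp ((2 * (Real.pi : ℂ) / w2) *
    ((∑ j ∈ Finset.Icc 1 n, γ (n, j)) - ∑ j ∈ Finset.Icc 1 (n - 1), γ (n - 1, j)))

/-- The Cartan operator `ϱ(K_n)`. -/
def qK (w2 : ℂ) (n : ℕ) : Op := fun f γ => kfac w2 n γ * f γ

/-- The inverse Cartan operator `ϱ(K_n)⁻¹`. -/
def qKinv (w2 : ℂ) (n : ℕ) : Op := fun f γ => (kfac w2 n γ)⁻¹ * f γ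

/-- The raising operator `ϱ(E_{n,n+1})`. -/
def qE (w1 w2 : ℂ) (n : ℕ) : Op := fun f γ =>
  (2 * Complex.I * Complex.exp ((Real.pi : ℂ) * Complex.I * w1 * ((n : ℂ) - 1) / w2) /
      Complex.sin (2 * (Real.pi : ℂ) * w1 / w2)) *
    ∑ j ∈ Finset.Icc 1 n,
      ((∏ r ∈ Finset.Icc 1 (n + 1),
            Complex.sinh ((2 * (Real.pi : ℂ) / w2) *
              (γ (n, j) - γ (n + 1, r) - Complex.I * w1 / 2))) /
          ∏ s ∈ (Finset.Icc 1 n).erase j,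
            Complex.sinh ((2 * (Real.pi : ℂ) / w2) * (γ (n, j) - γ (n, s)))) *
        f (shift n j (-(Complex.I * w1)) γ)

/-- The lowering operator `ϱ(E_{n+1,n})`. -/
def qF (w1 w2 : ℂ) (n : ℕ) : Op := fun f γ =>
  -(Complex.I * Complex.exp (-((Real.pi : ℂ) * Complex.I * w1 * ((n : ℂ) - 1)) / w2) /
      (2 * Complex.sin (2 * (Real.pi : ℂ) * w1 / w2))) *
    ∑ j ∈ Finset.Icc 1 n,
      ((∏ r ∈ Finset.Icc 1 (n - 1),
            Complex.sinh ((2 * (Real.pi : ℂ) / w2) *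
              (γ (n, j) - γ (n - 1, r) + Complex.I * w1 / 2))) /
          ∏ s ∈ (Finset.Icc 1 n).erase j,
            Complex.sinh ((2 * (Real.pi : ℂ) / w2) * (γ (n, j) - γ (n, s)))) *
        f (shift n j (Complex.I * w1) γ)

/-- Genericity: all sinh-denominators, also at arguments shifted by `iω₁·a` with
`|a| ≤ d`, are nonzero. -/
def QGeneric (N : ℕ) (w1 w2 : ℂ) (d : ℕ) (γ : Pt) : Prop :=
  ∀ m j s, 1 ≤ m → m ≤ N → 1 ≤ j → j ≤ m → 1 ≤ s → s ≤ m → j ≠ s →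
    ∀ a : ℤ, a.natAbs ≤ d →
      Complex.sinh ((2 * (Real.pi : ℂ) / w2) *
        (γ (m, j) - γ (m, s) + Complex.I * w1 * (a : ℂ))) ≠ 0

/-- The function `h_n(γ) = ∑_{j=1}^n γ_{nj} − ∑_{j=1}^{n−1} γ_{n−1,j}`. -/
def hfun (n : ℕ) (γ : Pt) : ℂ :=
  (∑ j ∈ Finset.Icc 1 n, γ (n, j)) - ∑ j ∈ Finset.Icc 1 (n - 1), γ (n - 1, j)

/-- The quantum Whittaker vector `w′`. -/
def wq (N : ℕ) (w1 w2 : ℂ) (c' : ℕ → ℕ → ℂ) (d : ℕ → ℤ) (γ : Pt) : ℂ :=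
  Complex.exp (-((Real.pi : ℂ) * Complex.I / (w1 * w2)) *
      ∑ n ∈ Finset.Icc 1 N, ∑ m ∈ Finset.Icc 1 N, c' n m * hfun n γ * hfun m γ) *
    ∏ n ∈ Finset.Icc 1 (N - 1),
      Complex.exp (((Real.pi : ℂ) * Complex.I / (w1 * w2)) *
          (∑ p ∈ Finset.Icc 1 n, (γ (n, p)) ^ 2) +
        ((Real.pi : ℂ) * (w1 + w2) * ((d n : ℤ) : ℂ) / (w1 * w2)) *
          ∑ p ∈ Finset.Icc 1 n, γ (n, p))


lemma shift_apply (n j : ℕ) (c : ℂ) (γ : Pt) (p : ℕ × ℕ) :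
    shift n j c γ p = γ p + (if p = (n, j) then c else 0) := by
  unfold shift; split <;> simp

lemma sum_shift (n j k : ℕ) (c : ℂ) (γ : Pt) (hj1 : 1 ≤ j) (hjn : j ≤ n) :
    ∑ p ∈ Finset.Icc 1 k, shift n j c γ (k, p)
      = (∑ p ∈ Finset.Icc 1 k, γ (k, p)) + if k = n then c else 0 := by
  simp only [shift_apply, Prod.mk.injEq, Finset.sum_add_distrib]
  congr 1
  by_cases hk : k = n
  · subst hk
    simp [Finset.sum_ite_eq', Finset.mem_Icc, hj1, hjn]
  · simp [hk]

lemma sum_sq_shift (n j k : ℕ) (c : ℂ) (γ : Pt) (hj1 : 1 ≤ j) (hjn : j ≤ n) :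
    ∑ p ∈ Finset.Icc 1 k, (shift n j c γ (k, p))^2
      = (∑ p ∈ Finset.Icc 1 k, (γ (k, p))^2)
        + if k = n then 2*c*γ (n, j) + c^2 else 0 := by
  have hterm : ∀ p, (shift n j c γ (k, p))^2
      = (γ (k, p))^2 + (if (k, p) = (n, j) then 2*c*γ (n, j) + c^2 else 0) := by
    intro p
    rw [shift_apply]
    split_ifs with h
    · rw [show γ (k, p) = γ (n, j) from by rw [h]]
      ring
    · ring
  rw [Finset.sum_congr rfl fun p _ => hterm p, Finset.sum_add_distrib]
  congr 1
  simp only [Prod.mk.injEq]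
  by_cases hk : k = n
  · subst hk
    simp [Finset.sum_ite_eq', Finset.mem_Icc, hj1, hjn]
  · simp [hk]

lemma hfun_shift (n j m : ℕ) (c : ℂ) (γ : Pt) (hj1 : 1 ≤ j) (hjn : j ≤ n) (hm : 1 ≤ m) :
    hfun m (shift n j c γ)
      = hfun m γ + ((if m = n then c else 0) - (if m = n + 1 then c else 0)) := by
  unfold hfun
  rw [sum_shift n j m c γ hj1 hjn, sum_shift n j (m-1) c γ hj1 hjn]
  have hiff : (m - 1 = n) = (m = n + 1) := by
    apply propext; constructor <;> intro h <;> omega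
  simp only [hiff]
  ring

lemma double_sum_delta (S : Finset ℕ) (n₀ n₁ : ℕ) (hn₀ : n₀ ∈ S) (hn₁ : n₁ ∈ S) (c : ℂ)
    (F : ℕ → ℕ → ℂ) (h : ℕ → ℂ) :
    ∑ a ∈ S, ∑ b ∈ S, F a b * (h a + ((if a = n₀ then c else 0) - (if a = n₁ then c else 0)))
        * (h b + ((if b = n₀ then c else 0) - (if b = n₁ then c else 0)))
      = (∑ a ∈ S, ∑ b ∈ S, F a b * h a * h b)
        + c * (∑ a ∈ S, (F a n₀ - F a n₁) * h a)
        + c * (∑ b ∈ S, (F n₀ b - F n₁ b) * h b)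
        + c^2 * (F n₀ n₀ - F n₀ n₁ - F n₁ n₀ + F n₁ n₁) := by
  set δ : ℕ → ℂ := fun m => (if m = n₀ then c else 0) - (if m = n₁ then c else 0) with hδ
  have hsd : ∀ f : ℕ → ℂ, ∑ b ∈ S, f b * δ b = (f n₀ - f n₁) * c := by
    intro f
    simp only [hδ, mul_sub, mul_ite, mul_zero, Finset.sum_sub_distrib,
      Finset.sum_ite_eq', hn₀, hn₁, if_true]
    ring
  have step1 : ∀ a ∈ S, ∑ b ∈ S, F a b * (h a + δ a) * (h b + δ b)
      = (h a + δ a) * ((∑ b ∈ S, F a b * h b) + (F a n₀ - F a n₁) * c) := by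
    intro a _
    have expand : ∀ b, F a b * (h a + δ a) * (h b + δ b)
        = (h a + δ a) * (F a b * h b) + ((h a + δ a) * F a b) * δ b := fun b => by ring
    rw [Finset.sum_congr rfl fun b _ => expand b, Finset.sum_add_distrib,
      hsd (fun b => (h a + δ a) * F a b), ← Finset.mul_sum]
    ring
  rw [Finset.sum_congr rfl step1]
  have expand2 : ∀ a, (h a + δ a) * ((∑ b ∈ S, F a b * h b) + (F a n₀ - F a n₁) * c)
      = (h a * (∑ b ∈ S, F a b * h b) + c * ((F a n₀ - F a n₁) * h a))
        + ((∑ b ∈ S, F a b * h b) + (F a n₀ - F a n₁) * c) * δ a := fun a => by ring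
  rw [Finset.sum_congr rfl fun a _ => expand2 a, Finset.sum_add_distrib,
    Finset.sum_add_distrib, hsd (fun a => (∑ b ∈ S, F a b * h b) + (F a n₀ - F a n₁) * c),
    ← Finset.mul_sum]
  have hfirst : ∑ a ∈ S, h a * ∑ b ∈ S, F a b * h b
      = ∑ a ∈ S, ∑ b ∈ S, F a b * h a * h b := by
    refine Finset.sum_congr rfl fun a _ => ?_
    rw [Finset.mul_sum]; exact Finset.sum_congr rfl fun b _ => by ring
  have hg : ∑ b ∈ S, (F n₀ b - F n₁ b) * h b
      = (∑ b ∈ S, F n₀ b * h b) - (∑ b ∈ S, F n₁ b * h b) := by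
    rw [← Finset.sum_sub_distrib]; exact Finset.sum_congr rfl fun b _ => by ring
  rw [hfirst, hg]
  ring

lemma wq_shift (N : ℕ) (hN : 2 ≤ N) (w1 w2 : ℂ) (h1 : w1 ≠ 0) (h2 : w2 ≠ 0)
    (c' : ℕ → ℕ → ℂ)
    (hsym : ∀ n m, 1 ≤ n → n ≤ N → 1 ≤ m → m ≤ N → c' n m = c' m n)
    (e : ℕ → ℕ → ℤ)
    (he : ∀ n m, 1 ≤ n → n ≤ N - 1 → 1 ≤ m → m ≤ N →
      ((e n m : ℤ) : ℂ) = c' n m - c' (n + 1) m)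
    (d : ℕ → ℤ)
    (hd : ∀ n, 1 ≤ n → n ≤ N - 1 →
      ((d n : ℤ) : ℂ) = 2 * (n : ℂ) - c' n n + 2 * c' n (n + 1) - c' (n + 1) (n + 1) - 1)
    (n : ℕ) (hn1 : 1 ≤ n) (hn2 : n ≤ N - 1) (j : ℕ) (hj1 : 1 ≤ j) (hjn : j ≤ n) (γ : Pt) :
    wq N w1 w2 c' d (shift n j (Complex.I * w1) γ)
      = ((-1 : ℂ) ^ (d n) * Complex.exp (2 * (Real.pi:ℂ) * Complex.I * w1 * ((n:ℂ) - 1) / w2)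
          * (∏ m ∈ Finset.Icc 1 N, (kfac w2 m γ) ^ (e n m))
          * Complex.exp (-(2 * (Real.pi:ℂ) / w2 * γ (n, j)))) * wq N w1 w2 c' d γ := by
  have hnN : n ∈ Finset.Icc 1 N := by simp only [Finset.mem_Icc]; omega
  have hn1N : n + 1 ∈ Finset.Icc 1 N := by simp only [Finset.mem_Icc]; omega
  have hnN1 : n ∈ Finset.Icc 1 (N-1) := by simp only [Finset.mem_Icc]; omega
  set c : ℂ := Complex.I * w1 with hcdef
  have hH : ∀ m ∈ Finset.Icc 1 N, hfun m (shift n j c γ)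
      = hfun m γ + ((if m = n then c else 0) - (if m = n + 1 then c else 0)) := by
    intro m hm
    simp only [Finset.mem_Icc] at hm
    exact hfun_shift n j m c γ hj1 hjn hm.1
  unfold wq
  have hQ' : ∑ a ∈ Finset.Icc 1 N, ∑ b ∈ Finset.Icc 1 N,
        c' a b * hfun a (shift n j c γ) * hfun b (shift n j c γ)
      = (∑ a ∈ Finset.Icc 1 N, ∑ b ∈ Finset.Icc 1 N, c' a b * hfun a γ * hfun b γ)
        + c * (∑ a ∈ Finset.Icc 1 N, (c' a n - c' a (n+1)) * hfun a γ)
        + c * (∑ b ∈ Finset.Icc 1 N, (c' n b - c' (n+1) b) * hfun b γ)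
        + c^2 * (c' n n - c' n (n+1) - c' (n+1) n + c' (n+1) (n+1)) := by
    rw [← double_sum_delta (Finset.Icc 1 N) n (n+1) hnN hn1N c c' (fun m => hfun m γ)]
    exact Finset.sum_congr rfl fun a ha => Finset.sum_congr rfl fun b hb => by
      rw [hH a ha, hH b hb]
  rw [hQ']
  rw [← Complex.exp_sum, ← Complex.exp_sum]
  have hprod : ∑ k ∈ Finset.Icc 1 (N-1),
        ((Real.pi : ℂ) * Complex.I / (w1 * w2) *
          (∑ p ∈ Finset.Icc 1 k, (shift n j c γ (k, p))^2)
        + (Real.pi : ℂ) * (w1 + w2) * ((d k : ℤ) : ℂ) / (w1 * w2) *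
          (∑ p ∈ Finset.Icc 1 k, shift n j c γ (k, p)))
      = (∑ k ∈ Finset.Icc 1 (N-1),
          ((Real.pi : ℂ) * Complex.I / (w1 * w2) * (∑ p ∈ Finset.Icc 1 k, (γ (k, p))^2)
          + (Real.pi : ℂ) * (w1 + w2) * ((d k : ℤ) : ℂ) / (w1 * w2) *
            (∑ p ∈ Finset.Icc 1 k, γ (k, p))))
        + ((Real.pi : ℂ) * Complex.I / (w1 * w2) * (2*c*γ (n, j) + c^2)
          + (Real.pi : ℂ) * (w1 + w2) * ((d n : ℤ) : ℂ) / (w1 * w2) * c) := by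
    have hterm : ∀ k ∈ Finset.Icc 1 (N-1),
        ((Real.pi : ℂ) * Complex.I / (w1 * w2) *
          (∑ p ∈ Finset.Icc 1 k, (shift n j c γ (k, p))^2)
        + (Real.pi : ℂ) * (w1 + w2) * ((d k : ℤ) : ℂ) / (w1 * w2) *
          (∑ p ∈ Finset.Icc 1 k, shift n j c γ (k, p)))
        = ((Real.pi : ℂ) * Complex.I / (w1 * w2) * (∑ p ∈ Finset.Icc 1 k, (γ (k, p))^2)
          + (Real.pi : ℂ) * (w1 + w2) * ((d k : ℤ) : ℂ) / (w1 * w2) *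
            (∑ p ∈ Finset.Icc 1 k, γ (k, p)))
          + (if k = n then ((Real.pi : ℂ) * Complex.I / (w1 * w2) * (2*c*γ (n, j) + c^2)
            + (Real.pi : ℂ) * (w1 + w2) * ((d k : ℤ) : ℂ) / (w1 * w2) * c) else 0) := by
      intro k _
      rw [sum_sq_shift n j k c γ hj1 hjn, sum_shift n j k c γ hj1 hjn]
      split_ifs with hk <;> ring
    rw [Finset.sum_congr rfl hterm, Finset.sum_add_distrib, Finset.sum_ite_eq']
    simp [hnN1]
  rw [hprod]
  have hm1 : (-1 : ℂ)^(d n)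
      = Complex.exp (((d n : ℤ) : ℂ) * ((Real.pi : ℂ) * Complex.I)) := by
    rw [Complex.exp_int_mul, Complex.exp_pi_mul_I]
  have hkf : ∏ m ∈ Finset.Icc 1 N, (kfac w2 m γ) ^ (e n m)
      = Complex.exp (∑ m ∈ Finset.Icc 1 N,
          ((e n m : ℤ) : ℂ) * ((2 * (Real.pi:ℂ) / w2) * hfun m γ)) := by
    rw [Complex.exp_sum]
    exact Finset.prod_congr rfl fun m _ => (Complex.exp_int_mul _ _).symm
  rw [hm1, hkf]
  simp only [← Complex.exp_add]
  congr 1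
  have hT1 : ∑ a ∈ Finset.Icc 1 N, (c' a n - c' a (n+1)) * hfun a γ
      = ∑ b ∈ Finset.Icc 1 N, (c' n b - c' (n+1) b) * hfun b γ := by
    refine Finset.sum_congr rfl fun a ha => ?_
    simp only [Finset.mem_Icc] at ha
    rw [hsym a n ha.1 ha.2 hn1 (by omega), hsym a (n+1) ha.1 ha.2 (by omega) (by omega)]
  have hE : ∑ m ∈ Finset.Icc 1 N, ((e n m : ℤ) : ℂ) * ((2 * (Real.pi:ℂ) / w2) * hfun m γ)
      = (2 * (Real.pi:ℂ) / w2) * ∑ b ∈ Finset.Icc 1 N, (c' n b - c' (n+1) b) * hfun b γ := by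
    rw [Finset.mul_sum]
    refine Finset.sum_congr rfl fun m hm => ?_
    simp only [Finset.mem_Icc] at hm
    rw [he n m hn1 hn2 hm.1 hm.2]
    ring
  rw [hT1, hE]
  have hsym' : c' (n+1) n = c' n (n+1) := hsym (n+1) n (by omega) (by omega) hn1 (by omega)
  rw [hsym']
  rw [hd n hn1 hn2, hcdef]
  field_simp
  linear_combination (w1 *
    (-(2*(Real.pi:ℂ)) * (∑ b ∈ Finset.Icc 1 N, (c' n b - c' (n+1) b) * hfun b γ)
      + 2*(Real.pi:ℂ) * γ (n, j)
      + (Real.pi:ℂ) * Complex.I * w1 *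
          (1 - (c' n n - 2 * c' n (n+1) + c' (n+1) (n+1))))) * Complex.I_sq


/-- `w′` is a Whittaker vector for the lowering operators of the
`U_q(gl(N))` representation: `ϱ(E_{n+1,n}) w′ = (χ′_n/(q − q⁻¹)) ϱ(K_n)⁻¹
∏_{m=1}^N ϱ(K_m)^{c′_{nm} − c′_{n+1,m}} w′`, with `χ′_n = (−1)^{d_n}`, at every
point where all the sinh-denominators occurring are nonzero. -/
theorem uq_whittaker_vector (N : ℕ) (hN : 2 ≤ N) (w1 w2 : ℂ) (h1 : w1 ≠ 0) (h2 : w2 ≠ 0)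
    (hsin : Complex.sin (2 * (Real.pi : ℂ) * w1 / w2) ≠ 0)
    (hq2 : (qpar w1 w2) ^ 2 ≠ 1)
    (c' : ℕ → ℕ → ℂ)
    (hsym : ∀ n m, 1 ≤ n → n ≤ N → 1 ≤ m → m ≤ N → c' n m = c' m n)
    (e : ℕ → ℕ → ℤ)
    (he : ∀ n m, 1 ≤ n → n ≤ N - 1 → 1 ≤ m → m ≤ N →
      ((e n m : ℤ) : ℂ) = c' n m - c' (n + 1) m)
    (d : ℕ → ℤ)
    (hd : ∀ n, 1 ≤ n → n ≤ N - 1 →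
      ((d n : ℤ) : ℂ) = 2 * (n : ℂ) - c' n n + 2 * c' n (n + 1) - c' (n + 1) (n + 1) - 1)
    (n : ℕ) (hn1 : 1 ≤ n) (hn2 : n ≤ N - 1)
    (γ : Pt) (hγ : QGeneric N w1 w2 0 γ) :
    qF w1 w2 n (wq N w1 w2 c' d) γ =
      ((-1 : ℂ) ^ (d n) / (qpar w1 w2 - (qpar w1 w2)⁻¹)) *
        ((kfac w2 n γ)⁻¹ * ∏ m ∈ Finset.Icc 1 N, (kfac w2 m γ) ^ (e n m)) *
        wq N w1 w2 c' d γ := by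
  have hNn : n ≤ N := by omega
  have hne' : ∀ j s, j ∈ Finset.Icc 1 n → s ∈ Finset.Icc 1 n → j ≠ s →
      Complex.sinh ((2 * (Real.pi:ℂ) / w2) * (γ (n, j) - γ (n, s))) ≠ 0 := by
    intro j s hj hs hjs
    simp only [Finset.mem_Icc] at hj hs
    have := hγ n j s hn1 hNn hj.1 hj.2 hs.1 hs.2 hjs 0 (by simp)
    simpa using this
  simp only [qF]
  have hstep : ∀ j ∈ Finset.Icc 1 n,
      ((∏ r ∈ Finset.Icc 1 (n - 1),
            Complex.sinh ((2 * (Real.pi : ℂ) / w2) *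
              (γ (n, j) - γ (n - 1, r) + Complex.I * w1 / 2))) /
          ∏ s ∈ (Finset.Icc 1 n).erase j,
            Complex.sinh ((2 * (Real.pi : ℂ) / w2) * (γ (n, j) - γ (n, s)))) *
        (wq N w1 w2 c' d) (shift n j (Complex.I * w1) γ)
      = (((∏ r ∈ Finset.Icc 1 (n - 1),
            Complex.sinh ((2 * (Real.pi : ℂ) / w2) *
              (γ (n, j) - γ (n - 1, r) + Complex.I * w1 / 2))) /
          ∏ s ∈ (Finset.Icc 1 n).erase j,
            Complex.sinh ((2 * (Real.pi : ℂ) / w2) * (γ (n, j) - γ (n, s)))) *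
            Complex.exp (-((2 * (Real.pi:ℂ) / w2) * γ (n, j))))
        * (((-1 : ℂ) ^ (d n) * Complex.exp (2 * (Real.pi:ℂ) * Complex.I * w1 * ((n:ℂ) - 1) / w2)
            * (∏ m ∈ Finset.Icc 1 N, (kfac w2 m γ) ^ (e n m))) * wq N w1 w2 c' d γ) := by
    intro j hj
    simp only [Finset.mem_Icc] at hj
    rw [wq_shift N hN w1 w2 h1 h2 c' hsym e he d hd n hn1 hn2 j hj.1 hj.2 γ]
    ring
  rw [Finset.sum_congr rfl hstep, ← Finset.sum_mul]
  rw [sinh_sum n hn1 (2 * (Real.pi:ℂ) / w2) (Complex.I * w1 / 2)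
    (fun p => γ (n, p)) (fun r => γ (n - 1, r)) hne']
  have hkfn : Complex.exp ((2 * (Real.pi:ℂ) / w2) *
        ((∑ r ∈ Finset.Icc 1 (n-1), γ (n-1, r)) - ∑ s ∈ Finset.Icc 1 n, γ (n, s)))
      * kfac w2 n γ = 1 := by
    simp only [kfac]
    rw [← Complex.exp_add]
    convert Complex.exp_zero using 2
    ring
  have hexp3 : Complex.exp (-((Real.pi:ℂ) * Complex.I * w1 * ((n:ℂ)-1)) / w2)
      * Complex.exp (-((2 * (Real.pi:ℂ) / w2) * (Complex.I * w1 / 2)) * ((n:ℂ)-1))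
      * Complex.exp (2 * (Real.pi:ℂ) * Complex.I * w1 * ((n:ℂ)-1) / w2) = 1 := by
    rw [← Complex.exp_add, ← Complex.exp_add]
    convert Complex.exp_zero using 2
    ring
  have hq : qpar w1 w2 - (qpar w1 w2)⁻¹
      = 2 * Complex.I * Complex.sin (2*(Real.pi:ℂ)*w1/w2) := by
    have hq1 : qpar w1 w2 = Complex.exp (2*(Real.pi:ℂ)*w1/w2 * Complex.I) := by
      unfold qpar; congr 1; ring
    rw [hq1, ← Complex.exp_neg, Complex.sin]
    rw [show -(2*(Real.pi:ℂ)*w1/w2) * Complex.I = -(2*(Real.pi:ℂ)*w1/w2 * Complex.I) by ring]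
    linear_combination (Complex.exp (2*(Real.pi:ℂ)*w1/w2 * Complex.I)
      - Complex.exp (-(2*(Real.pi:ℂ)*w1/w2 * Complex.I))) * Complex.I_sq
  rw [hq, inv_eq_of_mul_eq_one_left hkfn]
  set EA := Complex.exp (-((Real.pi:ℂ) * Complex.I * w1 * ((n:ℂ)-1)) / w2) with hEA
  set EB := Complex.exp (-((2 * (Real.pi:ℂ) / w2) * (Complex.I * w1 / 2)) * ((n:ℂ)-1)) with hEB
  set EC := Complex.exp ((2 * (Real.pi:ℂ) / w2) *
    ((∑ r ∈ Finset.Icc 1 (n-1), γ (n-1, r)) - ∑ s ∈ Finset.Icc 1 n, γ (n, s))) with hEC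
  set ED := Complex.exp (2 * (Real.pi:ℂ) * Complex.I * w1 * ((n:ℂ)-1) / w2) with hED
  set Ke := ∏ m ∈ Finset.Icc 1 N, (kfac w2 m γ) ^ (e n m) with hKe
  set W := wq N w1 w2 c' d γ with hW
  set sθ := Complex.sin (2*(Real.pi:ℂ)*w1/w2) with hsθ
  set χ := (-1 : ℂ) ^ (d n) with hχ
  field_simp
  linear_combination (-2*Complex.I^2*(χ*EC*Ke*W*sθ)) * hexp3 + (-2*(χ*EC*Ke*W*sθ)) * Complex.I_sq
    + ((2*sθ-1)*(EA*EB*EC*χ*ED*Ke*W)) * Complex.I_sq - ((2*sθ-1)*(EC*χ*Ke*W)) * hexp3
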